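/- Let f: 𝔄 → 𝔅 be an elementary team embedding between τ-structures, let R be a fresh n-ary relation symbol, let ψ be an existential second-order (ESO) sentence over the signature τ ∪ {R}, and let X ⊆ A^n. If the expansion (𝔄, X) of 𝔄 interpreting R as X satisfies ψ, then the expansion (𝔅, f(X)) of 𝔅 interpreting R as f(X) satisfies ψ. (In other words, elementary team embeddings preserve all existential second-order definable properties of relations in the forward direction.) -/

import Mathlib

open FirstOrder Language Set

universe u v w x

namespace TeamSem

/-- A purely relational language consisting of `k` fresh relation symbols with
prescribed arities. -/
def relLang (k : ℕ) (ar : Fin k → ℕ) : FirstOrder.Language where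
  Functions := fun _ => Empty
  Relations := fun n => {i : Fin k // ar i = n}

/-- Interpret the `k` fresh relation symbols by the given relations on `M`. -/
def relStructure {k : ℕ} {ar : Fin k → ℕ} {M : Type w}
    (S : ∀ i : Fin k, Set (Fin (ar i) → M)) : (relLang k ar).Structure M where
  funMap := fun f _ => f.elim
  RelMap := fun R v => (fun j => v (Fin.cast R.2 j)) ∈ S R.1

/-- Satisfaction of a first-order sentence over `L` together with `k` fresh relation
symbols, in the expansion of `M` interpreting the fresh symbols by `S`. -/
def RealizeWith {L : FirstOrder.Language.{u, v}} (M : Type w) [L.Structure M] {k : ℕ} {ar : Fin k → ℕ}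
    (φ : (L.sum (relLang k ar)).Sentence) (S : ∀ i : Fin k, Set (Fin (ar i) → M)) : Prop :=
  letI := relStructure S
  M ⊨ φ

/-- An existential second-order sentence over `L`: finitely many fresh relation symbols
together with a first-order sentence over the enlarged language. -/
structure ESOSentence (L : FirstOrder.Language.{u, v}) where
  k : ℕ
  ar : Fin k → ℕ
  toSentence : (L.sum (relLang k ar)).Sentence

/-- Satisfaction of an existential second-order sentence. -/
def ESOSentence.Realize {L : FirstOrder.Language.{u, v}} (ψ : ESOSentence L) (M : Type w)
    [L.Structure M] : Prop :=
  ∃ S : ∀ i : Fin ψ.k, Set (Fin (ψ.ar i) → M), RealizeWith M ψ.toSentence S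

/-- The Cartesian product of an `n`-ary and an `m`-ary relation. -/
def teamProd {A : Type w} {n m : ℕ} (X : Set (Fin n → A)) (Y : Set (Fin m → A)) :
    Set (Fin (n + m) → A) :=
  {s | (fun i => s (Fin.castAdd m i)) ∈ X ∧ (fun j => s (Fin.natAdd n j)) ∈ Y}

/-- The generalized projection `Pr_ι` of an `n`-ary relation. -/
def teamProj {A : Type w} {n m : ℕ} (ι : Fin m → Fin n) (X : Set (Fin n → A)) :
    Set (Fin m → A) :=
  (fun b => b ∘ ι) '' X

/-- The diagonal (identity) relation on `A`. -/
def diag (A : Type w) : Set (Fin 2 → A) := {s | s 0 = s 1}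

/-- The interpretation of a relation symbol, as a set of tuples. -/
def relSet (L : FirstOrder.Language.{u, v}) (A : Type w) [L.Structure A] {n : ℕ} (R : L.Relations n) :
    Set (Fin n → A) :=
  {s | Structure.RelMap R s}

/-- The graph of the interpretation of a function symbol, as a set of tuples. -/
def funGraph (L : FirstOrder.Language.{u, v}) (A : Type w) [L.Structure A] {n : ℕ} (F : L.Functions n) :
    Set (Fin (n + 1) → A) :=
  {s | Structure.funMap F (fun i => s i.castSucc) = s (Fin.last n)}

/-- A family of relations on `A` that is closed under the operations generating the
closure `cl`; a family `𝒴` satisfies `𝒴 = cl(𝒴)` precisely when it is closed. -/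
structure IsClosedFamily (L : FirstOrder.Language.{u, v}) (A : Type w) [L.Structure A]
    (𝒴 : ∀ n : ℕ, Set (Set (Fin n → A))) : Prop where
  empty_mem : ∀ n, (∅ : Set (Fin n → A)) ∈ 𝒴 n
  univ_mem : ∀ n, (Set.univ : Set (Fin n → A)) ∈ 𝒴 n
  inter_mem : ∀ (n : ℕ) (X Y : Set (Fin n → A)), X ∈ 𝒴 n → Y ∈ 𝒴 n → X ∩ Y ∈ 𝒴 n
  prod_mem : ∀ (n m : ℕ) (X : Set (Fin n → A)) (Y : Set (Fin m → A)),
    X ∈ 𝒴 n → Y ∈ 𝒴 m → teamProd X Y ∈ 𝒴 (n + m)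
  proj_mem : ∀ (n m : ℕ) (ι : Fin m → Fin n) (X : Set (Fin n → A)),
    X ∈ 𝒴 n → teamProj ι X ∈ 𝒴 m
  diag_mem : diag A ∈ 𝒴 2
  rel_mem : ∀ (n : ℕ) (R : L.Relations n), relSet L A R ∈ 𝒴 n
  graph_mem : ∀ (n : ℕ) (F : L.Functions n), funGraph L A F ∈ 𝒴 (n + 1)

/-- A partial team map from `A` to `B`.  Arities are preserved by typing; the domain
and the range are closed families (equivalently, `dom f = cl(dom f)` and
`ran f = cl(ran f)`); the empty relation of each arity is mapped to the empty relation
(in the untyped setting this is automatic for arity-preserving maps). -/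
structure PartialTeamMap (L : FirstOrder.Language.{u, v}) (A : Type w) (B : Type x)
    [L.Structure A] [L.Structure B] where
  dom : ∀ n : ℕ, Set (Set (Fin n → A))
  toFun : ∀ n : ℕ, Set (Fin n → A) → Set (Fin n → B)
  dom_closed : IsClosedFamily L A dom
  ran_closed : IsClosedFamily L B fun n => toFun n '' dom n
  map_empty : ∀ n, toFun n (∅ : Set (Fin n → A)) = ∅

namespace PartialTeamMap

variable {L : FirstOrder.Language.{u, v}} {A : Type w} {B : Type x} [L.Structure A] [L.Structure B]

/-- The range family of a partial team map. -/
def ran (f : PartialTeamMap L A B) : ∀ n : ℕ, Set (Set (Fin n → B)) :=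
  fun n => f.toFun n '' f.dom n

/-- Conditions (PI1)–(PI6): `f` is a partial team isomorphism. -/
structure IsIso (f : PartialTeamMap L A B) : Prop where
  empty_iff : ∀ (n : ℕ) (X : Set (Fin n → A)), X ∈ f.dom n → (X = ∅ ↔ f.toFun n X = ∅)
  univ_iff : ∀ (n : ℕ) (X : Set (Fin n → A)), X ∈ f.dom n →
    (X = Set.univ ↔ f.toFun n X = Set.univ)
  singleton_iff : ∀ (n : ℕ) (X : Set (Fin n → A)), X ∈ f.dom n →
    ((∃ s, X = {s}) ↔ ∃ t, f.toFun n X = {t})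
  map_prod : ∀ (n m : ℕ) (X : Set (Fin n → A)) (Y : Set (Fin m → A)),
    X ∈ f.dom n → Y ∈ f.dom m →
    f.toFun (n + m) (teamProd X Y) = teamProd (f.toFun n X) (f.toFun m Y)
  map_proj : ∀ (n m : ℕ) (ι : Fin m → Fin n) (X : Set (Fin n → A)), X ∈ f.dom n →
    f.toFun m (teamProj ι X) = teamProj ι (f.toFun n X)
  subset_iff : ∀ (n : ℕ) (X Y : Set (Fin n → A)), X ∈ f.dom n → Y ∈ f.dom n →
    (X ⊆ Y ↔ f.toFun n X ⊆ f.toFun n Y)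
  map_diag : f.toFun 2 (diag A) = diag B
  map_rel : ∀ (n : ℕ) (R : L.Relations n), f.toFun n (relSet L A R) = relSet L B R
  map_graph : ∀ (n : ℕ) (F : L.Functions n), f.toFun (n + 1) (funGraph L A F) = funGraph L B F

/-- `f` is a partial elementary team map: it preserves (in both directions) all
first-order sentences over `L` augmented by fresh relation symbols interpreted by
nonempty relations from the domain of `f`. -/
def IsElementary (f : PartialTeamMap L A B) : Prop :=
  ∀ (k : ℕ) (ar : Fin k → ℕ) (φ : (L.sum (relLang k ar)).Sentence)
    (X : ∀ i : Fin k, Set (Fin (ar i) → A)),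
    (∀ i, X i ∈ f.dom (ar i)) → (∀ i, (X i).Nonempty) →
    (RealizeWith A φ X ↔ RealizeWith B φ fun i => f.toFun (ar i) (X i))

/-- `f` is total: its domain consists of all relations on `A`. -/
def Total (f : PartialTeamMap L A B) : Prop := ∀ n, f.dom n = Set.univ

/-- Every singleton `{a}`, `a : A`, of arity 1 is in the domain of `f`. -/
def ElementTotal (f : PartialTeamMap L A B) : Prop :=
  ∀ a : A, ({fun _ => a} : Set (Fin 1 → A)) ∈ f.dom 1

/-- Every singleton `{b}`, `b : B`, of arity 1 is in the range of `f`. -/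
def ElementSurjective (f : PartialTeamMap L A B) : Prop :=
  ∀ b : B, ({fun _ => b} : Set (Fin 1 → B)) ∈ f.ran 1

end PartialTeamMap

end TeamSem

namespace TeamSem

section Aux

variable {L : FirstOrder.Language.{u, v}}

/-- Pad an empty relation (of any arity) to the full nullary relation. -/
noncomputable def pad {A : Type w} (p : Σ m, Set (Fin m → A)) : Σ m, Set (Fin m → A) :=
  haveI := Classical.propDecidable p.2.Nonempty
  if p.2.Nonempty then p else ⟨0, Set.univ⟩

lemma pad_of_nonempty {A : Type w} {p : Σ m, Set (Fin m → A)} (h : p.2.Nonempty) :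
    pad p = p := by
  simp only [pad]
  rw [if_pos h]

lemma pad_of_empty {A : Type w} {p : Σ m, Set (Fin m → A)} (h : ¬ p.2.Nonempty) :
    pad p = ⟨0, Set.univ⟩ := by
  simp only [pad]
  rw [if_neg h]

lemma pad_nonempty {A : Type w} (p : Σ m, Set (Fin m → A)) : (pad p).2.Nonempty := by
  by_cases h : p.2.Nonempty
  · rw [pad_of_nonempty h]; exact h
  · rw [pad_of_empty h]; exact ⟨fun i => i.elim0, Set.mem_univ _⟩

lemma mem_of_sigma_eq {A : Type w} {m1 m2 m : ℕ} {Y1 : Set (Fin m1 → A)}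
    {Y2 : Set (Fin m2 → A)}
    (h : (⟨m1, Y1⟩ : Σ m', Set (Fin m' → A)) = ⟨m2, Y2⟩)
    (e1 : m1 = m) (e2 : m2 = m) (v : Fin m → A) :
    ((fun i => v (Fin.cast e1 i)) ∈ Y1) ↔ ((fun i => v (Fin.cast e2 i)) ∈ Y2) := by
  subst e1
  subst e2
  obtain ⟨-, h2⟩ := Sigma.mk.inj_iff.mp h
  rw [eq_of_heq h2]

lemma sigma_map_eq {A : Type w} {B : Type x} (F : ∀ m, Set (Fin m → A) → Set (Fin m → B))
    {m1 m2 : ℕ} {Y1 : Set (Fin m1 → A)} {Y2 : Set (Fin m2 → A)}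
    (h : (⟨m1, Y1⟩ : Σ m', Set (Fin m' → A)) = ⟨m2, Y2⟩) :
    (⟨m1, F m1 Y1⟩ : Σ m', Set (Fin m' → B)) = ⟨m2, F m2 Y2⟩ := by
  obtain ⟨e, h2⟩ := Sigma.mk.inj_iff.mp h
  subst e
  rw [eq_of_heq h2]

/-- Translation of terms from a doubly-summed relational expansion to a singly-summed one
(the fresh relational languages have no function symbols). -/
def flatTerm {k1 k2 K : ℕ} {a1 : Fin k1 → ℕ} {a2 : Fin k2 → ℕ} {aK : Fin K → ℕ}
    {α : Type} : ((L.sum (relLang k1 a1)).sum (relLang k2 a2)).Term α →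
      (L.sum (relLang K aK)).Term α
  | .var v => .var v
  | .func (Sum.inl (Sum.inl f)) ts => .func (Sum.inl f) (fun i => flatTerm (ts i))
  | .func (Sum.inl (Sum.inr e)) _ => e.elim
  | .func (Sum.inr e) _ => e.elim

/-- Translation of formulas from a doubly-summed relational expansion to a singly-summed
one, guided by a partial mapping `g` of fresh relation symbols; symbols sent to `none`
are replaced by `⊥`. -/
def flatFormula {k1 k2 K : ℕ} {a1 : Fin k1 → ℕ} {a2 : Fin k2 → ℕ} {aK : Fin K → ℕ}
    (g : ∀ m : ℕ, ({i : Fin k1 // a1 i = m} ⊕ {i : Fin k2 // a2 i = m}) →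
      Option {j : Fin K // aK j = m}) :
    ∀ {m : ℕ}, ((L.sum (relLang k1 a1)).sum (relLang k2 a2)).BoundedFormula Empty m →
      (L.sum (relLang K aK)).BoundedFormula Empty m
  | _, .falsum => .falsum
  | _, .equal t₁ t₂ => .equal (flatTerm t₁) (flatTerm t₂)
  | _, .rel (Sum.inl (Sum.inl R)) ts => .rel (Sum.inl R) (fun i => flatTerm (ts i))
  | _, .rel (Sum.inl (Sum.inr r)) ts =>
      (g _ (Sum.inl r)).elim .falsum (fun j => .rel (Sum.inr j) (fun i => flatTerm (ts i)))
  | _, .rel (Sum.inr r) ts =>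
      (g _ (Sum.inr r)).elim .falsum (fun j => .rel (Sum.inr j) (fun i => flatTerm (ts i)))
  | _, .imp f₁ f₂ => .imp (flatFormula g f₁) (flatFormula g f₂)
  | _, .all f => .all (flatFormula g f)

lemma flatTerm_realize {M : Type w} [L.Structure M] {k1 k2 K : ℕ}
    {a1 : Fin k1 → ℕ} {a2 : Fin k2 → ℕ} {aK : Fin K → ℕ}
    (T1 : ∀ i, Set (Fin (a1 i) → M)) (T2 : ∀ i, Set (Fin (a2 i) → M))
    (TK : ∀ j, Set (Fin (aK j) → M)) {α : Type}
    (t : ((L.sum (relLang k1 a1)).sum (relLang k2 a2)).Term α) (v : α → M) :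
    (letI := relStructure T1; letI := relStructure T2; letI := relStructure TK;
      (flatTerm (K := K) (aK := aK) t).realize v = t.realize v) := by
  letI := relStructure T1; letI := relStructure T2; letI := relStructure TK
  induction t with
  | var => simp [flatTerm]
  | @func l F ts ih =>
      rcases F with (F | e) | e
      · simp only [flatTerm, Term.realize_func]
        show Structure.funMap F _ = Structure.funMap F _
        congr 1
        funext i
        exact ih i
      · exact e.elim
      · exact e.elim

lemma flatFormula_realize {M : Type w} [L.Structure M] {k1 k2 K : ℕ}
    {a1 : Fin k1 → ℕ} {a2 : Fin k2 → ℕ} {aK : Fin K → ℕ}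
    (T1 : ∀ i, Set (Fin (a1 i) → M)) (T2 : ∀ i, Set (Fin (a2 i) → M))
    (TK : ∀ j, Set (Fin (aK j) → M))
    (g : ∀ m : ℕ, ({i : Fin k1 // a1 i = m} ⊕ {i : Fin k2 // a2 i = m}) →
      Option {j : Fin K // aK j = m})
    (H : ∀ (m : ℕ) (r : {i : Fin k1 // a1 i = m} ⊕ {i : Fin k2 // a2 i = m})
        (v : Fin m → M),
      (Sum.elim (fun r1 : {i : Fin k1 // a1 i = m} => (fun i => v (Fin.cast r1.2 i)) ∈ T1 r1.1)
        (fun r2 : {i : Fin k2 // a2 i = m} => (fun i => v (Fin.cast r2.2 i)) ∈ T2 r2.1) r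
       ↔ ∃ j : {j : Fin K // aK j = m}, g m r = some j ∧ (fun i => v (Fin.cast j.2 i)) ∈ TK j.1))
    {m : ℕ} (φ : ((L.sum (relLang k1 a1)).sum (relLang k2 a2)).BoundedFormula Empty m)
    (vv : Empty → M) (xs : Fin m → M) :
    (letI := relStructure T1; letI := relStructure T2; letI := relStructure TK;
      ((flatFormula g φ).Realize vv xs ↔ φ.Realize vv xs)) := by
  letI := relStructure T1; letI := relStructure T2; letI := relStructure TK
  induction φ with
  | falsum => exact Iff.rfl
  | equal t₁ t₂ =>
      show (flatTerm t₁).realize _ = (flatTerm t₂).realize _ ↔ _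
      rw [flatTerm_realize T1 T2 TK, flatTerm_realize T1 T2 TK]
      exact Iff.rfl
  | @rel l ln R ts =>
      have hts : (fun i => (flatTerm (K := K) (aK := aK) (ts i)).realize (Sum.elim vv xs))
          = fun i => (ts i).realize (Sum.elim vv xs) := by
        funext i; exact flatTerm_realize T1 T2 TK (ts i) _
      rcases R with (R | r1) | r2
      · show Structure.RelMap (L := L.sum (relLang K aK)) (Sum.inl R)
            (fun i => (flatTerm (ts i)).realize (Sum.elim vv xs)) ↔ _
        rw [hts]
        exact Iff.rfl
      · have h := H ln (Sum.inl r1) (fun i => (ts i).realize (Sum.elim vv xs))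
        rcases hg : g ln (Sum.inl r1) with - | j
        · show (BoundedFormula.Realize
              ((g ln (Sum.inl r1)).elim .falsum
                (fun j => .rel (Sum.inr j) (fun i => flatTerm (ts i)))) vv xs) ↔ _
          rw [hg]
          rw [hg] at h
          constructor
          · intro hf
            exact (show False from hf).elim
          · intro hmem
            obtain ⟨j, hj, -⟩ := h.mp hmem
            cases hj
        · show (BoundedFormula.Realize
              ((g ln (Sum.inl r1)).elim .falsum
                (fun j => .rel (Sum.inr j) (fun i => flatTerm (ts i)))) vv xs) ↔ _
          rw [hg]
          rw [hg] at h
          have hsimp : (∃ j' : {j' : Fin K // aK j' = ln}, some j = some j' ∧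
              (fun i => (ts (Fin.cast j'.2 i)).realize (Sum.elim vv xs)) ∈ TK j'.1) ↔
              (fun i => (ts (Fin.cast j.2 i)).realize (Sum.elim vv xs)) ∈ TK j.1 := by
            constructor
            · rintro ⟨j', hj', hm⟩
              obtain rfl : j = j' := Option.some.inj hj'
              exact hm
            · intro hm
              exact ⟨j, rfl, hm⟩
          have hts2 : (fun i => (flatTerm (K := K) (aK := aK)
                (ts (Fin.cast j.2 i))).realize (Sum.elim vv xs))
              = (fun i => (ts (Fin.cast j.2 i)).realize (Sum.elim vv xs)) :=
            funext fun i => flatTerm_realize T1 T2 TK _ _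
          show (fun i => (flatTerm (ts (Fin.cast j.2 i))).realize (Sum.elim vv xs)) ∈ TK j.1 ↔ _
          rw [hts2]
          exact (h.trans hsimp).symm
      · have h := H ln (Sum.inr r2) (fun i => (ts i).realize (Sum.elim vv xs))
        rcases hg : g ln (Sum.inr r2) with - | j
        · show (BoundedFormula.Realize
              ((g ln (Sum.inr r2)).elim .falsum
                (fun j => .rel (Sum.inr j) (fun i => flatTerm (ts i)))) vv xs) ↔ _
          rw [hg]
          rw [hg] at h
          constructor
          · intro hf
            exact (show False from hf).elim
          · intro hmem
            obtain ⟨j, hj, -⟩ := h.mp hmem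
            cases hj
        · show (BoundedFormula.Realize
              ((g ln (Sum.inr r2)).elim .falsum
                (fun j => .rel (Sum.inr j) (fun i => flatTerm (ts i)))) vv xs) ↔ _
          rw [hg]
          rw [hg] at h
          have hsimp : (∃ j' : {j' : Fin K // aK j' = ln}, some j = some j' ∧
              (fun i => (ts (Fin.cast j'.2 i)).realize (Sum.elim vv xs)) ∈ TK j'.1) ↔
              (fun i => (ts (Fin.cast j.2 i)).realize (Sum.elim vv xs)) ∈ TK j.1 := by
            constructor
            · rintro ⟨j', hj', hm⟩
              obtain rfl : j = j' := Option.some.inj hj'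
              exact hm
            · intro hm
              exact ⟨j, rfl, hm⟩
          have hts2 : (fun i => (flatTerm (K := K) (aK := aK)
                (ts (Fin.cast j.2 i))).realize (Sum.elim vv xs))
              = (fun i => (ts (Fin.cast j.2 i)).realize (Sum.elim vv xs)) :=
            funext fun i => flatTerm_realize T1 T2 TK _ _
          show (fun i => (flatTerm (ts (Fin.cast j.2 i))).realize (Sum.elim vv xs)) ∈ TK j.1 ↔ _
          rw [hts2]
          exact (h.trans hsimp).symm
  | imp f₁ f₂ ih₁ ih₂ =>
      exact imp_congr (ih₁ xs) (ih₂ xs)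
  | all f ih =>
      exact forall_congr' fun a => ih _

lemma key {A : Type w} {B : Type x} [L.Structure A] [L.Structure B]
    (f : PartialTeamMap L A B) (hTot : f.Total) (hEl : f.IsElementary)
    {k1 k2 : ℕ} {a1 : Fin k1 → ℕ} {a2 : Fin k2 → ℕ}
    (T1 : ∀ i, Set (Fin (a1 i) → A)) (T2 : ∀ i, Set (Fin (a2 i) → A))
    (φ : ((L.sum (relLang k1 a1)).sum (relLang k2 a2)).Sentence)
    (h : (letI := relStructure T1; letI := relStructure T2; A ⊨ φ)) :
    (letI := relStructure (fun i => f.toFun (a1 i) (T1 i));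
     letI := relStructure (fun i => f.toFun (a2 i) (T2 i)); B ⊨ φ) := by
  classical
  -- the combined family of relations on `A`, as dependent pairs
  set q0 : Fin k1 ⊕ Fin k2 → Σ m, Set (Fin m → A) :=
    Sum.elim (fun i => ⟨a1 i, T1 i⟩) (fun i => ⟨a2 i, T2 i⟩) with hq0
  set p : Fin (k1 + k2) → Σ m, Set (Fin m → A) :=
    fun j => pad (q0 (finSumFinEquiv.symm j)) with hp
  set aK : Fin (k1 + k2) → ℕ := fun j => (p j).1 with haK
  set TK : ∀ j, Set (Fin (aK j) → A) := fun j => (p j).2 with hTKdef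
  have hpj : ∀ s : Fin k1 ⊕ Fin k2, (q0 s).2.Nonempty →
      (⟨aK (finSumFinEquiv s), TK (finSumFinEquiv s)⟩ : Σ m, Set (Fin m → A)) = q0 s := by
    intro s hs
    show p (finSumFinEquiv s) = q0 s
    rw [hp]
    simp only [Equiv.symm_apply_apply]
    exact pad_of_nonempty hs
  have harr : ∀ s : Fin k1 ⊕ Fin k2, (q0 s).2.Nonempty →
      aK (finSumFinEquiv s) = (q0 s).1 := fun s hs =>
    congrArg Sigma.fst (hpj s hs)
  set g : ∀ m : ℕ, ({i : Fin k1 // a1 i = m} ⊕ {i : Fin k2 // a2 i = m}) →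
      Option {j : Fin (k1 + k2) // aK j = m} := fun m r =>
    if hne : (q0 (Sum.map Subtype.val Subtype.val r)).2.Nonempty then
      some ⟨finSumFinEquiv (Sum.map Subtype.val Subtype.val r),
        (harr _ hne).trans (by rcases r with r1 | r2; exacts [r1.2, r2.2])⟩
    else none with hgdef
  -- condition (H) over A
  have HA : ∀ (m : ℕ) (r : {i : Fin k1 // a1 i = m} ⊕ {i : Fin k2 // a2 i = m})
      (v : Fin m → A),
      (Sum.elim (fun r1 : {i : Fin k1 // a1 i = m} => (fun i => v (Fin.cast r1.2 i)) ∈ T1 r1.1)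
        (fun r2 : {i : Fin k2 // a2 i = m} => (fun i => v (Fin.cast r2.2 i)) ∈ T2 r2.1) r
       ↔ ∃ j : {j : Fin (k1 + k2) // aK j = m},
          g m r = some j ∧ (fun i => v (Fin.cast j.2 i)) ∈ TK j.1) := by
    intro m r v
    by_cases hne : (q0 (Sum.map Subtype.val Subtype.val r)).2.Nonempty
    · have hg : g m r = some ⟨finSumFinEquiv (Sum.map Subtype.val Subtype.val r),
          (harr _ hne).trans (by rcases r with r1 | r2; exacts [r1.2, r2.2])⟩ := dif_pos hne
      rw [hg]
      have e2 : (q0 (Sum.map Subtype.val Subtype.val r)).1 = m := by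
        rcases r with r1 | r2; exacts [r1.2, r2.2]
      have hmem := mem_of_sigma_eq (hpj _ hne) ((harr _ hne).trans e2) e2 v
      constructor
      · intro hl
        refine ⟨_, rfl, hmem.mpr ?_⟩
        rcases r with r1 | r2
        · exact hl
        · exact hl
      · rintro ⟨j, hj, hm⟩
        obtain rfl : _ = j := by injection hj
        have := hmem.mp hm
        rcases r with r1 | r2
        · exact this
        · exact this
    · have hg : g m r = none := dif_neg hne
      have hempty : (q0 (Sum.map Subtype.val Subtype.val r)).2 = ∅ :=
        Set.not_nonempty_iff_eq_empty.mp hne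
      constructor
      · intro hl
        exfalso
        rcases r with r1 | r2
        · exact absurd (Set.eq_empty_iff_forall_notMem.mp hempty _ hl) (fun h => h)
        · exact absurd (Set.eq_empty_iff_forall_notMem.mp hempty _ hl) (fun h => h)
      · rintro ⟨j, hj, -⟩
        rw [hg] at hj
        cases hj
    -- condition (H) over B
  have HB : ∀ (m : ℕ) (r : {i : Fin k1 // a1 i = m} ⊕ {i : Fin k2 // a2 i = m})
      (v : Fin m → B),
      (Sum.elim
        (fun r1 : {i : Fin k1 // a1 i = m} =>
          (fun i => v (Fin.cast r1.2 i)) ∈ f.toFun (a1 r1.1) (T1 r1.1))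
        (fun r2 : {i : Fin k2 // a2 i = m} =>
          (fun i => v (Fin.cast r2.2 i)) ∈ f.toFun (a2 r2.1) (T2 r2.1)) r
       ↔ ∃ j : {j : Fin (k1 + k2) // aK j = m},
          g m r = some j ∧ (fun i => v (Fin.cast j.2 i)) ∈ f.toFun (aK j.1) (TK j.1)) := by
    intro m r v
    by_cases hne : (q0 (Sum.map Subtype.val Subtype.val r)).2.Nonempty
    · have hg : g m r = some ⟨finSumFinEquiv (Sum.map Subtype.val Subtype.val r),
          (harr _ hne).trans (by rcases r with r1 | r2; exacts [r1.2, r2.2])⟩ := dif_pos hne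
      rw [hg]
      have e2 : (q0 (Sum.map Subtype.val Subtype.val r)).1 = m := by
        rcases r with r1 | r2; exacts [r1.2, r2.2]
      have hsig := sigma_map_eq (fun m Y => f.toFun m Y) (hpj _ hne)
      have hmem := mem_of_sigma_eq hsig ((harr _ hne).trans e2) e2 v
      constructor
      · intro hl
        refine ⟨_, rfl, hmem.mpr ?_⟩
        rcases r with r1 | r2
        · exact hl
        · exact hl
      · rintro ⟨j, hj, hm⟩
        obtain rfl : _ = j := by injection hj
        have := hmem.mp hm
        rcases r with r1 | r2
        · exact this
        · exact this
    · have hg : g m r = none := dif_neg hne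
      have hempty : (q0 (Sum.map Subtype.val Subtype.val r)).2 = ∅ :=
        Set.not_nonempty_iff_eq_empty.mp hne
      constructor
      · intro hl
        exfalso
        rcases r with r1 | r2
        · have : f.toFun (a1 r1.1) (T1 r1.1) = ∅ := by
            have hT : T1 r1.1 = ∅ := hempty
            rw [hT, f.map_empty]
          simp only [Sum.elim_inl] at hl
          rw [this] at hl
          exact hl
        · have : f.toFun (a2 r2.1) (T2 r2.1) = ∅ := by
            have hT : T2 r2.1 = ∅ := hempty
            rw [hT, f.map_empty]
          simp only [Sum.elim_inr] at hl
          rw [this] at hl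
          exact hl
      · rintro ⟨j, hj, -⟩
        rw [hg] at hj
        cases hj
  -- transfer via elementarity
  have hdom : ∀ j, TK j ∈ f.dom (aK j) := by
    intro j
    rw [hTot]
    trivial
  have hneK : ∀ j, (TK j).Nonempty := fun j => pad_nonempty _
  have hAside := flatFormula_realize T1 T2 TK g HA φ default default
  have hBside := flatFormula_realize (fun i => f.toFun (a1 i) (T1 i))
    (fun i => f.toFun (a2 i) (T2 i)) (fun j => f.toFun (aK j) (TK j)) g HB φ default default
  have hEq := hEl (k1 + k2) aK (flatFormula g φ) TK hdom hneK
  exact hBside.mp (hEq.mp (hAside.mpr h))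

end Aux

/-- **Elementary team embeddings preserve existential second-order properties of
relations** (in the forward direction): if `(𝔄, X) ⊨ ψ` for an ESO sentence `ψ` over
`τ ∪ {R}`, then `(𝔅, f(X)) ⊨ ψ`. -/
theorem elemTeamEmbedding_preserves_eso
    {L : FirstOrder.Language.{u, v}} {A : Type w} {B : Type x}
    [L.Structure A] [L.Structure B]
    (f : PartialTeamMap L A B) (hTot : f.Total) (hEl : f.IsElementary)
    (n : ℕ) (ψ : ESOSentence (L.sum (relLang 1 fun _ => n))) (X : Set (Fin n → A))
    (hA : letI := relStructure (M := A) (fun _ : Fin 1 => X); ψ.Realize A) :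
    letI := relStructure (M := B) (fun _ : Fin 1 => f.toFun n X); ψ.Realize B := by
  obtain ⟨S, hS⟩ := hA
  exact ⟨fun i => f.toFun (ψ.ar i) (S i),
    key f hTot hEl (fun _ : Fin 1 => X) S ψ.toSentence hS⟩

end TeamSem
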